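/- Let G be a digraph on vertex set [n] with a loop at every vertex and two opposite arcs between every pair of distinct vertices, properly arc-coloured with n colours (each vertex is the tail of exactly one arc of each colour and the head of exactly one arc of each colour). Then the number of non-rainbow directed triangles in G (triangles on three distinct vertices with consistently directed arcs in which some colour repeats) is at most n(n−1). -/

import Mathlib

/-- In a properly n-arc-coloured complete loopy digraph on [n], the number of
non-rainbow directed triangles is at most n(n−1). Directed triangles are counted as
cyclic objects, via the canonical representative whose first vertex is smallest. -/
theorem stmt_18 (n : ℕ) (φ : Fin n → Fin n → Fin n)
    (hout : ∀ v : Fin n, Function.Injective fun w => φ v w)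
    (hin : ∀ v : Fin n, Function.Injective fun w => φ w v) :
    ((Finset.univ : Finset (Fin n × Fin n × Fin n)).filter (fun t =>
        t.1 < t.2.1 ∧ t.1 < t.2.2 ∧ t.2.1 ≠ t.2.2 ∧
          (φ t.1 t.2.1 = φ t.2.1 t.2.2 ∨ φ t.2.1 t.2.2 = φ t.2.2 t.1 ∨
            φ t.1 t.2.1 = φ t.2.2 t.1))).card ≤ n * (n - 1) := by
  classical
  set T : Finset (Fin n × Fin n) :=
    (Finset.univ : Finset (Fin n × Fin n)).filter (fun p => p.2 ≠ φ p.1 p.1) with hT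
  have hTcard : T.card ≤ n * (n - 1) := by
    have hdiag : ((Finset.univ : Finset (Fin n × Fin n)).filter
        (fun p => p.2 = φ p.1 p.1)).card = n := by
      have himg : (Finset.univ : Finset (Fin n × Fin n)).filter (fun p => p.2 = φ p.1 p.1)
          = Finset.univ.image (fun v : Fin n => (v, φ v v)) := by
        ext ⟨p1, p2⟩
        simp only [Finset.mem_filter, Finset.mem_univ, true_and, Finset.mem_image,
          Prod.mk.injEq]
        constructor
        · intro h; exact ⟨p1, rfl, h.symm⟩
        · rintro ⟨v, rfl, h⟩; exact h.symm
      rw [himg, Finset.card_image_of_injective _ (fun a b h => (Prod.ext_iff.mp h).1),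
        Finset.card_univ, Fintype.card_fin]
    have hsum := Finset.card_filter_add_card_filter_not
      (s := (Finset.univ : Finset (Fin n × Fin n))) (p := fun p => p.2 = φ p.1 p.1)
    have huniv : (Finset.univ : Finset (Fin n × Fin n)).card = n * n := by
      simp [Finset.card_univ]
    have hmul : n * n = n * (n - 1) + n := by
      cases n with
      | zero => rfl
      | succ m => rw [Nat.succ_sub_one]; ring
    have hcard : ((Finset.univ : Finset (Fin n × Fin n)).filter
        (fun p => ¬ p.2 = φ p.1 p.1)).card = n * (n - 1) := by omega
    have : T.card = n * (n - 1) := by simpa [hT] using hcard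
    omega
  refine le_trans (Finset.card_le_card_of_injOn
    (fun t => if φ t.1 t.2.1 = φ t.2.1 t.2.2 then (t.2.1, φ t.1 t.2.1)
      else if φ t.2.1 t.2.2 = φ t.2.2 t.1 then (t.2.2, φ t.2.1 t.2.2)
      else (t.1, φ t.1 t.2.1)) ?_ ?_) hTcard
  · rintro ⟨a, b, c⟩ ht
    simp only [Finset.mem_coe, Finset.mem_filter, Finset.mem_univ, true_and] at ht
    obtain ⟨hab, hac, hbc, hor⟩ := ht
    simp only [hT, Finset.mem_coe, Finset.mem_filter, Finset.mem_univ, true_and]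
    split_ifs with h1 h2
    · intro hc
      exact absurd (hin b hc) (ne_of_lt hab)
    · intro hc
      exact absurd (hin c hc) hbc
    · intro hc
      exact absurd (hout a hc) (ne_of_lt hab).symm
  · rintro ⟨a1, b1, c1⟩ ht1 ⟨a2, b2, c2⟩ ht2 heq
    simp only [Finset.coe_filter, Set.mem_setOf_eq, Finset.mem_univ, true_and] at ht1 ht2
    obtain ⟨hab1, hac1, hbc1, hor1⟩ := ht1
    obtain ⟨hab2, hac2, hbc2, hor2⟩ := ht2
    simp only at heq
    by_cases A1 : φ a1 b1 = φ b1 c1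
    · by_cases A2 : φ a2 b2 = φ b2 c2
      · -- (1,1)
        rw [if_pos A1, if_pos A2, Prod.mk.injEq] at heq
        obtain ⟨hv, hcol⟩ := heq
        have ha : a1 = a2 := hin b1 (show φ a1 b1 = φ a2 b1 by rw [hcol, ← hv])
        have hc : c1 = c2 := hout b1
          (show φ b1 c1 = φ b1 c2 by rw [← A1, hcol, A2, ← hv])
        simp [Prod.ext_iff, ha, hv, hc]
      · by_cases B2 : φ b2 c2 = φ c2 a2
        · -- (1,2)
          rw [if_pos A1, if_neg A2, if_pos B2, Prod.mk.injEq] at heq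
          obtain ⟨hv, hcol⟩ := heq
          have hu : a1 = b2 := hin b1 (show φ a1 b1 = φ b2 b1 by rw [hcol, hv])
          have hw : c1 = a2 := hout b1
            (show φ b1 c1 = φ b1 a2 by rw [← A1, hcol, B2, hv])
          exact absurd (hac1.trans_eq hw)
            (not_lt.mpr (le_of_lt (hab2.trans_eq hu.symm)))
        · -- (1,3)
          have C2 : φ a2 b2 = φ c2 a2 := by tauto
          rw [if_pos A1, if_neg A2, if_neg B2, Prod.mk.injEq] at heq
          obtain ⟨hv, hcol⟩ := heq
          have hu : a1 = c2 := hin b1 (show φ a1 b1 = φ c2 b1 by rw [hcol, C2, ← hv])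
          exact absurd (hab1.trans_eq hv)
            (not_lt.mpr (le_of_lt (hac2.trans_eq hu.symm)))
    · by_cases B1 : φ b1 c1 = φ c1 a1
      · by_cases A2 : φ a2 b2 = φ b2 c2
        · -- (2,1)
          rw [if_neg A1, if_pos B1, if_pos A2, Prod.mk.injEq] at heq
          obtain ⟨hv, hcol⟩ := heq
          have hu : b1 = a2 := hin c1 (show φ b1 c1 = φ a2 c1 by rw [hcol, ← hv])
          have hw : a1 = c2 := hout c1
            (show φ c1 a1 = φ c1 c2 by rw [← B1, hcol, A2, ← hv])
          exact absurd (hab1.trans_eq hu)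
            (not_lt.mpr (le_of_lt (hac2.trans_eq hw.symm)))
        · by_cases B2 : φ b2 c2 = φ c2 a2
          · -- (2,2)
            rw [if_neg A1, if_pos B1, if_neg A2, if_pos B2, Prod.mk.injEq] at heq
            obtain ⟨hv, hcol⟩ := heq
            have hb : b1 = b2 := hin c1 (show φ b1 c1 = φ b2 c1 by rw [hcol, ← hv])
            have ha : a1 = a2 := hout c1
              (show φ c1 a1 = φ c1 a2 by rw [← B1, hcol, B2, ← hv])
            simp [Prod.ext_iff, ha, hb, hv]
          · -- (2,3)
            have C2 : φ a2 b2 = φ c2 a2 := by tauto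
            rw [if_neg A1, if_pos B1, if_neg A2, if_neg B2, Prod.mk.injEq] at heq
            obtain ⟨hv, hcol⟩ := heq
            have hw : a1 = b2 := hout c1
              (show φ c1 a1 = φ c1 b2 by rw [← B1, hcol, hv])
            exact absurd (hac1.trans_eq hv)
              (not_lt.mpr (le_of_lt (hab2.trans_eq hw.symm)))
      · have C1 : φ a1 b1 = φ c1 a1 := by tauto
        by_cases A2 : φ a2 b2 = φ b2 c2
        · -- (3,1)
          rw [if_neg A1, if_neg B1, if_pos A2, Prod.mk.injEq] at heq
          obtain ⟨hv, hcol⟩ := heq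
          have hu : c1 = a2 := hin a1 (show φ c1 a1 = φ a2 a1 by rw [← C1, hcol, ← hv])
          exact absurd (hac1.trans_eq hu)
            (not_lt.mpr (le_of_lt (hab2.trans_eq hv.symm)))
        · by_cases B2 : φ b2 c2 = φ c2 a2
          · -- (3,2)
            rw [if_neg A1, if_neg B1, if_neg A2, if_pos B2, Prod.mk.injEq] at heq
            obtain ⟨hv, hcol⟩ := heq
            have hu : b1 = a2 := hout a1
              (show φ a1 b1 = φ a1 a2 by rw [hcol, B2, ← hv])
            exact absurd (hab1.trans_eq hu)
              (not_lt.mpr (le_of_lt (hac2.trans_eq hv.symm)))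
          · -- (3,3)
            have C2 : φ a2 b2 = φ c2 a2 := by tauto
            rw [if_neg A1, if_neg B1, if_neg A2, if_neg B2, Prod.mk.injEq] at heq
            obtain ⟨hv, hcol⟩ := heq
            have hb : b1 = b2 := hout a1 (show φ a1 b1 = φ a1 b2 by rw [hcol, ← hv])
            have hc : c1 = c2 := hin a1
              (show φ c1 a1 = φ c2 a1 by rw [← C1, hcol, C2, ← hv])
            simp [Prod.ext_iff, hv, hb, hc]
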